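/- Let d = 3 and σ_0 > 0. The support function of the Tresca elastic region K = {σ ∈ S^3 : max_{i,j} |σ_i − σ_j| ≤ σ_0} (where σ_1, σ_2, σ_3 are the eigenvalues of σ), evaluated at a trace-free symmetric matrix p ∈ S^3_0 with eigenvalues p_1, p_2, p_3, equals σ_0 · max{|p_1|, |p_2|, |p_3|}, i.e., σ_0 times the spectral radius of p. -/
import Mathlib


open Matrix

section Aux

lemma tresca_max3_abs_of_sum_zero (d : Fin 3 → ℝ) (h : d 0 + d 1 + d 2 = 0) :
    (⨆ i, |d i|) = (|d 0| + |d 1| + |d 2|) / 2 := by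
  have hbdd : BddAbove (Set.range fun i => |d i|) := (Set.finite_range _).bddAbove
  have hm : ∀ i, |d i| ≤ ⨆ i, |d i| := fun i => le_ciSup hbdd i
  apply le_antisymm
  · apply ciSup_le
    have h0 : |d 0| ≤ |d 1| + |d 2| := by
      rw [show d 0 = -(d 1 + d 2) by linarith, abs_neg]; exact abs_add_le _ _
    have h1 : |d 1| ≤ |d 0| + |d 2| := by
      rw [show d 1 = -(d 0 + d 2) by linarith, abs_neg]; exact abs_add_le _ _
    have h2 : |d 2| ≤ |d 0| + |d 1| := by
      rw [show d 2 = -(d 0 + d 1) by linarith, abs_neg]; exact abs_add_le _ _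
    intro i; fin_cases i <;> simp <;> linarith
  · rcases abs_choice (d 0) with k0|k0 <;> rcases abs_choice (d 1) with k1|k1 <;>
      rcases abs_choice (d 2) with k2|k2 <;>
      linarith [hm 0, hm 1, hm 2, abs_nonneg (d 0), abs_nonneg (d 1), abs_nonneg (d 2)]

lemma tresca_posSum_of_sum_zero (d : Fin 3 → ℝ) (h : d 0 + d 1 + d 2 = 0) :
    ∑ i, max (d i) 0 = (|d 0| + |d 1| + |d 2|) / 2 := by
  have key : ∀ x : ℝ, max x 0 = (x + |x|) / 2 := by
    intro x
    rcases le_total 0 x with hx|hx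
    · rw [max_eq_left hx, abs_of_nonneg hx]; ring
    · rw [max_eq_right hx, abs_of_nonpos hx]; ring
  rw [Fin.sum_univ_three, key, key, key]
  linarith

variable {n : Type*} [Fintype n] [DecidableEq n]

lemma tresca_trace_unitary_conj (U M : Matrix n n ℝ) (hU : star U * U = 1) :
    trace (U * M * star U) = trace M := by
  rw [trace_mul_comm, ← mul_assoc, hU, one_mul]

lemma tresca_herm_trace_eq (A : Matrix n n ℝ) (hA : A.IsHermitian) :
    trace A = ∑ i, hA.eigenvalues i := by
  have he : A = (hA.eigenvectorUnitary : Matrix n n ℝ) * diagonal hA.eigenvalues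
      * star (hA.eigenvectorUnitary : Matrix n n ℝ) := by
    have := hA.spectral_theorem
    simpa using this
  conv_lhs => rw [he]
  rw [tresca_trace_unitary_conj _ _ (Unitary.coe_star_mul_self _), trace_diagonal]

lemma tresca_diag_trace_formula (e d : n → ℝ) (W : Matrix n n ℝ) :
    trace (star W * diagonal e * W * diagonal d)
      = ∑ i, d i * ∑ j, e j * (W j i) ^ 2 := by
  rw [trace]
  refine Finset.sum_congr rfl fun i _ => ?_
  rw [diag_apply, mul_diagonal]
  rw [show (star W * diagonal e * W) i i = ∑ j, e j * (W j i)^2 from ?_]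
  · ring
  · rw [mul_apply]
    refine Finset.sum_congr rfl fun j _ => ?_
    rw [mul_diagonal, star_apply, star_trivial]
    ring

lemma tresca_trace_mul_eq (A B : Matrix n n ℝ) (hA : A.IsHermitian) (hB : B.IsHermitian) :
    ∃ W : Matrix n n ℝ, (∀ i, ∑ j, (W j i) ^ 2 = 1) ∧
      trace (A * B) = ∑ i, hB.eigenvalues i * ∑ j, hA.eigenvalues j * (W j i) ^ 2 := by
  set V := (hA.eigenvectorUnitary : Matrix n n ℝ) with hV
  set U := (hB.eigenvectorUnitary : Matrix n n ℝ) with hU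
  have hVV : star V * V = 1 := Unitary.coe_star_mul_self _
  have hVV' : V * star V = 1 := Unitary.coe_mul_star_self _
  have hUU : star U * U = 1 := Unitary.coe_star_mul_self _
  refine ⟨star V * U, fun i => ?_, ?_⟩
  · have : (star (star V * U) * (star V * U)) i i = (1 : Matrix n n ℝ) i i := by
      rw [show star (star V * U) * (star V * U) = 1 from ?_]
      rw [StarMul.star_mul, star_star, mul_assoc, ← mul_assoc V, hVV', one_mul, hUU]
    rw [one_apply_eq] at this
    rw [← this, mul_apply]
    refine Finset.sum_congr rfl fun j _ => ?_
    simp only [star_apply, star_trivial]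
    ring
  · have he : A = V * diagonal hA.eigenvalues * star V := by
      have := hA.spectral_theorem
      simpa using this
    have hd : B = U * diagonal hB.eigenvalues * star U := by
      have := hB.spectral_theorem
      simpa using this
    have key : trace (A * B)
        = trace (star (star V * U) * diagonal hA.eigenvalues * (star V * U)
            * diagonal hB.eigenvalues) := by
      conv_lhs => rw [he, hd]
      rw [StarMul.star_mul, star_star]
      rw [show V * diagonal hA.eigenvalues * star V * (U * diagonal hB.eigenvalues * star U)
          = (V * diagonal hA.eigenvalues * star V * (U * diagonal hB.eigenvalues)) * star U from by
        simp only [mul_assoc], trace_mul_comm]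
      congr 1
      simp only [mul_assoc]
    rw [key, tresca_diag_trace_formula]

end Aux

/-- For `d = 3`, the support function of the Tresca elastic region
`K = {σ ∈ S³ : max_{i,j} |σ_i − σ_j| ≤ σ_0}` at a trace-free symmetric matrix `p`
equals `σ_0` times the spectral radius `max_i |p_i|` of `p`. -/
theorem tresca_dissipation (σ0 : ℝ) (hσ0 : 0 < σ0)
    (p : Matrix (Fin 3) (Fin 3) ℝ) (hp : p.IsHermitian) (hptr : p.trace = 0) :
    sSup {x : ℝ | ∃ σ : Matrix (Fin 3) (Fin 3) ℝ, ∃ hσ : σ.IsHermitian,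
        (∀ i j, |hσ.eigenvalues i - hσ.eigenvalues j| ≤ σ0) ∧ x = (σ * p).trace}
      = σ0 * (⨆ i, |hp.eigenvalues i|) := by
  classical
  set d := hp.eigenvalues with hd
  have hdsum : d 0 + d 1 + d 2 = 0 := by
    have := tresca_herm_trace_eq p hp
    rw [hptr, Fin.sum_univ_three] at this
    linarith [this.symm]
  have hMval : (⨆ i, |d i|) = (|d 0| + |d 1| + |d 2|) / 2 :=
    tresca_max3_abs_of_sum_zero d hdsum
  apply IsGreatest.csSup_eq
  constructor
  · -- membership : the supremum is attained
    set U := (hp.eigenvectorUnitary : Matrix (Fin 3) (Fin 3) ℝ) with hUdef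
    have hUU : star U * U = 1 := Unitary.coe_star_mul_self _
    have hUU' : U * star U = 1 := Unitary.coe_mul_star_self _
    set s : Fin 3 → ℝ := fun i => if 0 ≤ d i then σ0 / 2 else -(σ0 / 2) with hs
    set σm := U * diagonal s * star U with hσm
    have hσmh : σm.IsHermitian := by
      rw [hσm, Matrix.star_eq_conjTranspose]
      exact isHermitian_mul_mul_conjTranspose U (isHermitian_diagonal s)
    have hspec : ∀ i, ∃ k, hσmh.eigenvalues i = s k := by
      intro i
      have hmem := hσmh.eigenvalues_mem_spectrum_real i
      set u : (Matrix (Fin 3) (Fin 3) ℝ)ˣ := ⟨U, star U, hUU', hUU⟩ with hu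
      have huc : σm = (u : Matrix (Fin 3) (Fin 3) ℝ) * diagonal s
          * ((u⁻¹ : (Matrix (Fin 3) (Fin 3) ℝ)ˣ) : Matrix (Fin 3) (Fin 3) ℝ) := rfl
      have hsp : spectrum ℝ σm = Set.range s := by
        conv_lhs => rw [huc]
        rw [spectrum.units_conjugate, spectrum_diagonal]
      rw [hsp] at hmem
      obtain ⟨k, hk⟩ := hmem
      exact ⟨k, hk.symm⟩
    have habs : ∀ k, |s k| = σ0 / 2 := by
      intro k
      by_cases h : 0 ≤ d k <;>
        simp [hs, h, abs_of_nonneg (le_of_lt (half_pos hσ0))]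
    have hcon : ∀ i j, |hσmh.eigenvalues i - hσmh.eigenvalues j| ≤ σ0 := by
      intro i j
      obtain ⟨k, hk⟩ := hspec i
      obtain ⟨l, hl⟩ := hspec j
      rw [hk, hl]
      calc |s k - s l| ≤ |s k| + |s l| := abs_sub _ _
        _ = σ0 := by rw [habs, habs]; ring
    have htr : (σm * p).trace = ∑ i, s i * d i := by
      have he : p = U * diagonal d * star U := by
        have := hp.spectral_theorem
        simpa using this
      have hmm : σm * p = U * (diagonal s * diagonal d) * star U := by
        rw [hσm]
        conv_lhs => rw [he]
        simp only [mul_assoc]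
        rw [← mul_assoc (star U) U, hUU, one_mul]
      rw [hmm, tresca_trace_unitary_conj _ _ hUU, diagonal_mul_diagonal, trace_diagonal]
    have hval : ∑ i, s i * d i = σ0 * ⨆ i, |d i| := by
      have hterm : ∀ i, s i * d i = σ0 / 2 * |d i| := by
        intro i
        by_cases h : 0 ≤ d i
        · rw [abs_of_nonneg h]; simp [hs, h]
        · rw [abs_of_neg (lt_of_not_ge h)]
          simp only [hs]; rw [if_neg h]; ring
      calc ∑ i, s i * d i = ∑ i, σ0 / 2 * |d i| := Finset.sum_congr rfl fun i _ => hterm i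
        _ = σ0 / 2 * (|d 0| + |d 1| + |d 2|) := by rw [← Finset.mul_sum, Fin.sum_univ_three]
        _ = σ0 * ⨆ i, |d i| := by rw [hMval]; ring
    exact ⟨σm, hσmh, hcon, by rw [htr, hval]⟩
  · -- upper bound
    rintro x ⟨σ, hσ, hcon, rfl⟩
    obtain ⟨W, hW1, hWtr⟩ := tresca_trace_mul_eq σ p hσ hp
    rw [hWtr]
    set e := hσ.eigenvalues with he
    obtain ⟨j₀, -, hj₀⟩ := Finset.exists_min_image Finset.univ e ⟨0, Finset.mem_univ 0⟩
    have hj₀' : ∀ j, e j₀ ≤ e j := fun j => hj₀ j (Finset.mem_univ j)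
    set t : Fin 3 → ℝ := fun i => ∑ j, e j * (W j i) ^ 2 with ht
    have htlo : ∀ i, e j₀ ≤ t i := by
      intro i
      have : 0 ≤ ∑ j, (e j - e j₀) * (W j i) ^ 2 :=
        Finset.sum_nonneg fun j _ =>
          mul_nonneg (sub_nonneg.mpr (hj₀' j)) (sq_nonneg _)
      have hsplit : ∑ j, (e j - e j₀) * (W j i) ^ 2 = t i - e j₀ := by
        simp only [sub_mul, ht]
        rw [Finset.sum_sub_distrib, ← Finset.mul_sum, hW1 i, mul_one]
      linarith [hsplit ▸ this]
    have hthi : ∀ i, t i ≤ e j₀ + σ0 := by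
      intro i
      have hle : ∑ j, (e j - e j₀) * (W j i) ^ 2 ≤ ∑ j, σ0 * (W j i) ^ 2 := by
        refine Finset.sum_le_sum fun j _ => ?_
        refine mul_le_mul_of_nonneg_right ?_ (sq_nonneg _)
        exact (abs_le.mp (hcon j j₀)).2
      have hsplit : ∑ j, (e j - e j₀) * (W j i) ^ 2 = t i - e j₀ := by
        simp only [sub_mul, ht]
        rw [Finset.sum_sub_distrib, ← Finset.mul_sum, hW1 i, mul_one]
      rw [hsplit, ← Finset.mul_sum, hW1 i, mul_one] at hle
      linarith
    have hterm : ∀ i, d i * t i ≤ max (d i) 0 * σ0 + d i * e j₀ := by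
      intro i
      rcases le_total 0 (d i) with h|h
      · rw [max_eq_left h]
        nlinarith [htlo i, hthi i]
      · rw [max_eq_right h]
        nlinarith [htlo i, hthi i]
    calc ∑ i, d i * t i ≤ ∑ i, (max (d i) 0 * σ0 + d i * e j₀) :=
          Finset.sum_le_sum fun i _ => hterm i
      _ = (∑ i, max (d i) 0) * σ0 + (∑ i, d i) * e j₀ := by
          rw [Finset.sum_add_distrib, ← Finset.sum_mul, ← Finset.sum_mul]
      _ = σ0 * ⨆ i, |d i| := by
          rw [tresca_posSum_of_sum_zero d hdsum, Fin.sum_univ_three, hdsum, hMval]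
          ring
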